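/- Let M ≤ P be subgroups of a group Q with both M and P normal in Q, let (μ : M → P) be the normal subgroup crossed module (inclusion with conjugation action), and let ι : P → Q be the inclusion. Then for any induced crossed module (∂ : I → Q, j) of (μ : M → P) along ι, there is an isomorphism of groups I ≅ M × (M^{ab} ⊗_ℤ I(Q/P)), where M^{ab} is the abelianization of M and I(Q/P) denotes the augmentation ideal of the integral group ring ℤ[Q/P], i.e. the kernel of the augmentation homomorphism ℤ[Q/P] → ℤ. -/

import Mathlib

universe u

/-- A crossed module `(μ : M → P)`: groups `M`, `P`, a (right) action of `P` on `M` by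
group automorphisms, written `act m p` for `m ^ p`, and a homomorphism `μ : M →* P`
satisfying CM1: `μ (m ^ p) = p⁻¹ * μ m * p` and CM2: `n ^ (μ m) = m⁻¹ * n * m`. -/
structure CrossedModule (M P : Type u) [Group M] [Group P] where
  μ : M →* P
  act : M → P → M
  act_mul : ∀ m n p, act (m * n) p = act m p * act n p
  act_one : ∀ m, act m 1 = m
  act_act : ∀ m p q, act (act m p) q = act m (p * q)
  cm1 : ∀ m p, μ (act m p) = p⁻¹ * μ m * p
  cm2 : ∀ m n, act n (μ m) = m⁻¹ * n * m

/-- A morphism of crossed modules `(f, g) : (μ : M → P) → (ν : N → Q)`: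
group homomorphisms `f : M → N`, `g : P → Q` with `ν ∘ f = g ∘ μ` and
`f (m ^ p) = (f m) ^ (g p)`. -/
def CrossedModule.IsMorphism {M P N Q : Type u} [Group M] [Group P] [Group N] [Group Q]
    (X : CrossedModule M P) (Y : CrossedModule N Q) (f : M →* N) (g : P →* Q) : Prop :=
  (∀ m, Y.μ (f m) = g (X.μ m)) ∧ ∀ m p, f (X.act m p) = Y.act (f m) (g p)

/-- `(∂ : I → Q)` together with `j : M → I` is an induced crossed module of `(μ : M → P)`
along `ι : P → Q`: `(j, ι)` is a morphism of crossed modules, and for every crossed module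
`(ν : N → Q)` and morphism `(f, ι) : (μ : M → P) → (ν : N → Q)` there is a unique group
homomorphism `φ : I → N` with `ν ∘ φ = ∂`, `φ (x ^ q) = (φ x) ^ q`, and `φ ∘ j = f`. -/
def IsInducedCrossedModule {M P Q I : Type u} [Group M] [Group P] [Group Q] [Group I]
    (X : CrossedModule M P) (ι : P →* Q) (Y : CrossedModule I Q) (j : M →* I) : Prop :=
  CrossedModule.IsMorphism X Y j ι ∧
  ∀ (N : Type u) [Group N] (Z : CrossedModule N Q) (f : M →* N),
    CrossedModule.IsMorphism X Z f ι →
    ∃! φ : I →* N, (∀ x, Z.μ (φ x) = Y.μ x) ∧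
      (∀ x q, φ (Y.act x q) = Z.act (φ x) q) ∧ ∀ m, φ (j m) = f m

set_option linter.unusedSectionVars false

open MonoidAlgebra TensorProduct Multiplicative
open scoped IsMulCommutative

namespace IndAux

variable {Q : Type u} [Group Q] (M P : Subgroup Q) [hMQ : M.Normal] [hPQ : P.Normal]

/-- Conjugation by `q : Q` on the normal subgroup `M`. -/
def conj (q : Q) : ↥M →* ↥M where
  toFun m := ⟨q⁻¹ * (m : Q) * q, by
    simpa using hMQ.conj_mem (m : Q) m.2 q⁻¹⟩
  map_one' := by ext; simp
  map_mul' m n := by ext; simp; group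

@[simp] lemma conj_coe (q : Q) (m : ↥M) : (conj M q m : Q) = q⁻¹ * (m : Q) * q := rfl

lemma conj_conj (p q : Q) (m : ↥M) : conj M q (conj M p m) = conj M (p * q) m := by
  ext; simp; group

@[simp] lemma conj_one (m : ↥M) : conj M 1 m = m := by ext; simp

noncomputable abbrev eps : MonoidAlgebra ℤ (Q ⧸ P) →+* ℤ :=
  ((MonoidAlgebra.lift ℤ ℤ (Q ⧸ P)) 1).toRingHom

@[simp] lemma eps_single (g : Q ⧸ P) (c : ℤ) : eps P (MonoidAlgebra.single g c) = c := by
  simp [eps, MonoidAlgebra.lift_single]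

noncomputable abbrev Iaug : Ideal (MonoidAlgebra ℤ (Q ⧸ P)) := RingHom.ker (eps P)

abbrev AbM : Type u := Additive (Abelianization ↥M)

noncomputable abbrev A : Type u := TensorProduct ℤ (AbM M) ↥(Iaug P)

def ab (m : ↥M) : AbM M := Additive.ofMul (Abelianization.of m)

lemma ab_mul (m n : ↥M) : ab M (m * n) = ab M m + ab M n := by
  simp [ab, ← ofMul_mul]

/-- The element `[q] - 1` of the augmentation ideal. -/
noncomputable def delta (q : Q) : ↥(Iaug P) :=
  ⟨MonoidAlgebra.single (↑q : Q ⧸ P) 1 - 1, by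
    simp [RingHom.mem_ker, map_sub, eps_single]⟩

@[simp] lemma delta_coe (q : Q) :
    (delta P q : MonoidAlgebra ℤ (Q ⧸ P)) = MonoidAlgebra.single (↑q : Q ⧸ P) 1 - 1 := rfl

lemma delta_mem (q : Q) (hq : q ∈ P) : delta P q = 0 := by
  have : (↑q : Q ⧸ P) = 1 := (QuotientGroup.eq_one_iff q).2 hq
  ext; simp [this, MonoidAlgebra.one_def]

@[simp] lemma delta_one : delta P (1 : Q) = 0 := delta_mem P 1 (one_mem P)

/-- The inclusion of the augmentation ideal, as an additive hom. -/
def inclA : ↥(Iaug P) →+ MonoidAlgebra ℤ (Q ⧸ P) where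
  toFun := Subtype.val
  map_zero' := rfl
  map_add' _ _ := rfl

/-- Every element of the augmentation ideal is a `ℤ`-combination of the `delta q`. -/
lemma mem_span_delta (x : ↥(Iaug P)) :
    x ∈ Submodule.span ℤ (Set.range (delta P)) := by
  -- work in the ambient ring via the injective linear inclusion
  set f : ↥(Iaug P) →ₗ[ℤ] MonoidAlgebra ℤ (Q ⧸ P) := (inclA P).toIntLinearMap with hf
  have hinj : Function.Injective f := Subtype.val_injective
  have hximg : f x ∈ Submodule.map f (Submodule.span ℤ (Set.range (delta P))) := by
    rw [Submodule.map_span]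
    have hx : (x : MonoidAlgebra ℤ (Q ⧸ P)) =
        ∑ g ∈ (x : MonoidAlgebra ℤ (Q ⧸ P)).coeff.support,
          (x : MonoidAlgebra ℤ (Q ⧸ P)).coeff g • (MonoidAlgebra.single g 1 - 1) := by
      have hsum : ∑ g ∈ (x : MonoidAlgebra ℤ (Q ⧸ P)).coeff.support,
          (x : MonoidAlgebra ℤ (Q ⧸ P)).coeff g • (MonoidAlgebra.single g (1:ℤ)) =
          (x : MonoidAlgebra ℤ (Q ⧸ P)) := by
        have h1 : ∑ g ∈ (x : MonoidAlgebra ℤ (Q ⧸ P)).coeff.support,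
            (x : MonoidAlgebra ℤ (Q ⧸ P)).coeff g • (MonoidAlgebra.single g (1:ℤ)) =
            ∑ g ∈ (x : MonoidAlgebra ℤ (Q ⧸ P)).coeff.support,
            MonoidAlgebra.single g ((x : MonoidAlgebra ℤ (Q ⧸ P)).coeff g) := by
          refine Finset.sum_congr rfl (fun g _ => ?_)
          simp [MonoidAlgebra.smul_single]
        rw [h1]
        exact MonoidAlgebra.sum_coeff_single _
      have haug : ∑ g ∈ (x : MonoidAlgebra ℤ (Q ⧸ P)).coeff.support,
          (x : MonoidAlgebra ℤ (Q ⧸ P)).coeff g = 0 := by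
        have h0 : eps P (x : MonoidAlgebra ℤ (Q ⧸ P)) = 0 := x.2
        calc ∑ g ∈ (x : MonoidAlgebra ℤ (Q ⧸ P)).coeff.support,
              (x : MonoidAlgebra ℤ (Q ⧸ P)).coeff g
            = eps P (x : MonoidAlgebra ℤ (Q ⧸ P)) := by
              conv_rhs => rw [← hsum]
              rw [map_sum]
              simp [eps_single]
          _ = 0 := h0
      calc (x : MonoidAlgebra ℤ (Q ⧸ P))
          = (∑ g ∈ (x : MonoidAlgebra ℤ (Q ⧸ P)).coeff.support,
              (x : MonoidAlgebra ℤ (Q ⧸ P)).coeff g • (MonoidAlgebra.single g (1:ℤ)))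
            - (∑ g ∈ (x : MonoidAlgebra ℤ (Q ⧸ P)).coeff.support,
              (x : MonoidAlgebra ℤ (Q ⧸ P)).coeff g) • (1 : MonoidAlgebra ℤ (Q ⧸ P)) := by
            rw [hsum, haug]; simp
        _ = _ := by
            rw [Finset.sum_smul, ← Finset.sum_sub_distrib]
            congr 1; ext g; rw [smul_sub]
    show (x : MonoidAlgebra ℤ (Q ⧸ P)) ∈ _
    rw [hx]
    refine Submodule.sum_mem _ (fun g hg => Submodule.smul_mem _ _ ?_)
    obtain ⟨q, rfl⟩ := QuotientGroup.mk_surjective g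
    exact Submodule.subset_span ⟨delta P q, ⟨⟨q, rfl⟩, rfl⟩⟩
  obtain ⟨y, hy, hyx⟩ := hximg
  rwa [← hinj hyx]

end IndAux

set_option linter.unusedSectionVars false

namespace IndAux

variable {Q : Type u} [Group Q] (M P : Subgroup Q) [hMQ : M.Normal] [hPQ : P.Normal]

/-- The action of `q` on the abelianization of `M`, as a `ℤ`-linear map. -/
def alpha (q : Q) : AbM M →ₗ[ℤ] AbM M :=
  (MonoidHom.toAdditive (Abelianization.map (conj M q))).toIntLinearMap

@[simp] lemma alpha_ab (q : Q) (m : ↥M) : alpha M q (ab M m) = ab M (conj M q m) := by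
  simp [alpha, ab]

lemma abmap_conj_subgroup (m : ↥M) :
    Abelianization.map (conj M (m : Q)) = MonoidHom.id (Abelianization ↥M) := by
  apply Abelianization.hom_ext
  ext n
  simp only [MonoidHom.comp_apply, Abelianization.map_of, MonoidHom.id_apply,
    MonoidHom.id_comp]
  have h : conj M (m : Q) n = m⁻¹ * n * m := by ext; simp
  rw [h, Abelianization.of.map_mul, Abelianization.of.map_mul, Abelianization.of.map_inv]
  rw [mul_comm _ (Abelianization.of m)]
  group

lemma alpha_subgroup (m : ↥M) (t : AbM M) : alpha M (m : Q) t = t := by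
  simp [alpha, abmap_conj_subgroup, MonoidHom.toAdditive]

lemma alpha_one (t : AbM M) : alpha M 1 t = t := by
  have h : conj M (1 : Q) = MonoidHom.id ↥M := by ext n; simp
  have : Abelianization.map (conj M (1:Q)) = MonoidHom.id (Abelianization ↥M) := by
    rw [h, Abelianization.map_id]
  simp [alpha, this, MonoidHom.toAdditive]

lemma alpha_alpha (p q : Q) (t : AbM M) : alpha M q (alpha M p t) = alpha M (p * q) t := by
  have h : (Abelianization.map (conj M q)).comp (Abelianization.map (conj M p)) =
      Abelianization.map (conj M (p * q)) := by
    apply Abelianization.hom_ext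
    ext n
    simp [conj_conj]
  have := DFunLike.congr_fun h t.toMul
  simp only [MonoidHom.comp_apply] at this
  simpa [alpha] using congrArg Additive.ofMul this

/-- Right multiplication by `[q]` on the augmentation ideal, as a `ℤ`-linear map. -/
noncomputable def beta (q : Q) : ↥(Iaug P) →ₗ[ℤ] ↥(Iaug P) :=
  AddMonoidHom.toIntLinearMap
  { toFun := fun x => ⟨(x : MonoidAlgebra ℤ (Q ⧸ P)) * MonoidAlgebra.single (↑q : Q ⧸ P) 1,
      by
        have hx : eps P (x : MonoidAlgebra ℤ (Q ⧸ P)) = 0 := x.2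
        rw [RingHom.mem_ker, map_mul, hx, zero_mul]⟩
    map_zero' := by ext; simp
    map_add' := fun x y => by ext; simp [add_mul] }

@[simp] lemma beta_coe (q : Q) (x : ↥(Iaug P)) :
    (beta P q x : MonoidAlgebra ℤ (Q ⧸ P)) =
      (x : MonoidAlgebra ℤ (Q ⧸ P)) * MonoidAlgebra.single (↑q : Q ⧸ P) 1 := rfl

lemma beta_delta (q q' : Q) : beta P q (delta P q') = delta P (q' * q) - delta P q := by
  apply Subtype.ext
  push_cast [beta_coe, delta_coe]
  rw [sub_mul, one_mul, MonoidAlgebra.single_mul_single, one_mul]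
  have : ((q' * q : Q) : Q ⧸ P) = (↑q' : Q ⧸ P) * (↑q : Q ⧸ P) := rfl
  rw [this]
  abel

lemma beta_one (x : ↥(Iaug P)) : beta P 1 x = x := by
  ext
  have : ((1 : Q) : Q ⧸ P) = 1 := rfl
  simp [beta_coe, this, ← MonoidAlgebra.one_def]

lemma beta_subgroup (q : Q) (hq : q ∈ P) (x : ↥(Iaug P)) : beta P q x = x := by
  ext
  have : ((q : Q) : Q ⧸ P) = 1 := (QuotientGroup.eq_one_iff q).2 hq
  simp [beta_coe, this, ← MonoidAlgebra.one_def]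

lemma beta_beta (p q : Q) (x : ↥(Iaug P)) : beta P q (beta P p x) = beta P (p * q) x := by
  ext
  simp only [beta_coe]
  rw [mul_assoc, MonoidAlgebra.single_mul_single, one_mul]
  rfl

/-- The diagonal action of `q` on `M^{ab} ⊗ I(Q/P)`. -/
noncomputable def rho (q : Q) : A M P →ₗ[ℤ] A M P :=
  TensorProduct.map (alpha M q) (beta P q)

@[simp] lemma rho_tmul (q : Q) (t : AbM M) (x : ↥(Iaug P)) :
    rho M P q (t ⊗ₜ[ℤ] x) = alpha M q t ⊗ₜ[ℤ] beta P q x := rfl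

lemma rho_one (a : A M P) : rho M P 1 a = a := by
  induction a using TensorProduct.induction_on with
  | zero => simp
  | tmul t x => rw [rho_tmul, alpha_one, beta_one]
  | add a b ha hb => rw [map_add, ha, hb]

lemma rho_rho (p q : Q) (a : A M P) : rho M P q (rho M P p a) = rho M P (p * q) a := by
  induction a using TensorProduct.induction_on with
  | zero => simp
  | tmul t x => rw [rho_tmul, rho_tmul, alpha_alpha, beta_beta, rho_tmul]
  | add a b ha hb => simp only [map_add, ha, hb]

lemma rho_subgroup (m : ↥M) (hMP : M ≤ P) (a : A M P) : rho M P (m : Q) a = a := by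
  induction a using TensorProduct.induction_on with
  | zero => simp
  | tmul t x => rw [rho_tmul, alpha_subgroup, beta_subgroup _ _ (hMP m.2)]
  | add a b ha hb => rw [map_add, ha, hb]

end IndAux

namespace IndAux

variable {Q : Type u} [Group Q] (M P : Subgroup Q) [hMQ : M.Normal] [hPQ : P.Normal]

/-- The crossed module structure on `M × (M^{ab} ⊗ I(Q/P))`. -/
noncomputable def Zcm (hMP : M ≤ P) : CrossedModule (↥M × Multiplicative (A M P)) Q where
  μ := M.subtype.comp (MonoidHom.fst _ _)
  act x q := (conj M q x.1,
    Multiplicative.ofAdd (rho M P q x.2.toAdd + ab M (conj M q x.1) ⊗ₜ[ℤ] delta P q))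
  act_mul x y q := by
    refine Prod.ext (by simp [map_mul]) ?_
    show Multiplicative.ofAdd (rho M P q (x.2.toAdd + y.2.toAdd)
        + ab M (conj M q (x.1 * y.1)) ⊗ₜ[ℤ] delta P q)
      = Multiplicative.ofAdd ((rho M P q x.2.toAdd + ab M (conj M q x.1) ⊗ₜ[ℤ] delta P q)
        + (rho M P q y.2.toAdd + ab M (conj M q y.1) ⊗ₜ[ℤ] delta P q))
    refine congrArg Multiplicative.ofAdd ?_
    rw [map_add, map_mul, ab_mul, TensorProduct.add_tmul]
    abel
  act_one x := by
    refine Prod.ext (by simp) ?_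
    show Multiplicative.ofAdd (rho M P 1 x.2.toAdd + ab M (conj M 1 x.1) ⊗ₜ[ℤ] delta P 1) = x.2
    rw [rho_one, delta_one, TensorProduct.tmul_zero, add_zero]
    rfl
  act_act x p q := by
    refine Prod.ext (by simp [conj_conj]) ?_
    show Multiplicative.ofAdd (rho M P q (rho M P p x.2.toAdd
        + ab M (conj M p x.1) ⊗ₜ[ℤ] delta P p)
        + ab M (conj M q (conj M p x.1)) ⊗ₜ[ℤ] delta P q)
      = Multiplicative.ofAdd (rho M P (p * q) x.2.toAdd
        + ab M (conj M (p * q) x.1) ⊗ₜ[ℤ] delta P (p * q))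
    refine congrArg Multiplicative.ofAdd ?_
    rw [map_add, rho_rho, rho_tmul, alpha_ab, beta_delta, conj_conj,
      TensorProduct.tmul_sub]
    abel
  cm1 x q := by
    simp [conj_coe]
  cm2 x y := by
    refine Prod.ext ?_ ?_
    · show conj M ((x.1 : Q)) y.1 = (x⁻¹ * y * x).1
      ext; simp
    · show Multiplicative.ofAdd (rho M P (x.1 : Q) y.2.toAdd
          + ab M (conj M (x.1 : Q) y.1) ⊗ₜ[ℤ] delta P (x.1 : Q)) = (x⁻¹ * y * x).2
      rw [rho_subgroup M P _ hMP, delta_mem P _ (hMP x.1.2), TensorProduct.tmul_zero, add_zero]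
      show y.2 = x.2⁻¹ * y.2 * x.2
      rw [mul_comm x.2⁻¹, mul_assoc, inv_mul_cancel, mul_one]

/-- The inclusion `M → M × (M^{ab} ⊗ I(Q/P))`. -/
noncomputable def jK : ↥M →* ↥M × Multiplicative (A M P) :=
  (MonoidHom.id ↥M).prod 1

lemma jK_morphism (hMP : M ≤ P) (X : CrossedModule ↥M ↥P)
    (hXμ : ∀ m : M, (X.μ m : Q) = (m : Q))
    (hXact : ∀ (m : M) (p : P), ((X.act m p : ↥M) : Q) = (p : Q)⁻¹ * (m : Q) * (p : Q)) :
    CrossedModule.IsMorphism X (Zcm M P hMP) (jK M P) P.subtype := by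
  constructor
  · intro m
    show (m : Q) = (X.μ m : Q)
    rw [hXμ]
  · intro m p
    have h1 : X.act m p = conj M (p : Q) m := by ext; rw [hXact]; rfl
    refine Prod.ext ?_ ?_
    · show X.act m p = conj M (p : Q) m
      exact h1
    · show (1 : Multiplicative (A M P)) = Multiplicative.ofAdd
        (rho M P (p : Q) (Multiplicative.toAdd (1 : Multiplicative (A M P)))
          + ab M (conj M (p : Q) m) ⊗ₜ[ℤ] delta P (p : Q))
      rw [delta_mem P _ p.2, TensorProduct.tmul_zero]
      show (1 : Multiplicative (A M P)) = Multiplicative.ofAdd (rho M P (p : Q) 0 + 0)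
      rw [map_zero, add_zero]
      rfl

end IndAux

namespace IndAux

variable {Q : Type u} [Group Q] (M P : Subgroup Q) [hMQ : M.Normal] [hPQ : P.Normal]
variable {N : Type u} [Group N]

/-- The action by a fixed `q`, as a group endomorphism. -/
def actHom (Z : CrossedModule N Q) (q : Q) : N →* N :=
  MonoidHom.mk' (fun n => Z.act n q) (fun a b => Z.act_mul a b q)

lemma act_inv (Z : CrossedModule N Q) (x : N) (q : Q) : Z.act x⁻¹ q = (Z.act x q)⁻¹ :=
  (actHom Z q).map_inv x

lemma ker_central (Z : CrossedModule N Q) (x : N) (hx : Z.μ x = 1) :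
    x ∈ Subgroup.center N := by
  rw [Subgroup.mem_center_iff]
  intro g
  have h := Z.cm2 x g
  rw [hx, Z.act_one] at h
  calc g * x = x * (x⁻¹ * g * x) := by group
    _ = x * g := by rw [← h]

variable (Z : CrossedModule N Q) (f : ↥M →* N)

/-- The basic central elements `f(m)⁻¹ ⬝ (f(m^{q⁻¹}))^q`. -/
def EE (m : ↥M) (q : Q) : N := (f m)⁻¹ * Z.act (f (conj M q⁻¹ m)) q

section Ehyp

variable (hf1 : ∀ m : ↥M, Z.μ (f m) = (m : Q))
  (hf2 : ∀ (m : ↥M) (p : ↥P), f (conj M (p : Q) m) = Z.act (f m) (p : Q))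

include hf1 in
lemma EE_ker (m : ↥M) (q : Q) : Z.μ (EE M Z f m q) = 1 := by
  unfold EE
  rw [map_mul, map_inv, Z.cm1, hf1, hf1, conj_coe]
  group

include hf1 in
lemma EE_center (m : ↥M) (q : Q) : EE M Z f m q ∈ Subgroup.center N :=
  ker_central Z _ (EE_ker M Z f hf1 m q)

include hf1 in
lemma EE_mul (m n : ↥M) (q : Q) :
    EE M Z f (m * n) q = EE M Z f m q * EE M Z f n q := by
  have hc := Subgroup.mem_center_iff.1 (EE_center M Z f hf1 m q)
  unfold EE at hc ⊢
  rw [map_mul, map_mul, map_mul, Z.act_mul, mul_inv_rev]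
  rw [show (f n)⁻¹ * (f m)⁻¹ * (Z.act (f (conj M q⁻¹ m)) q * Z.act (f (conj M q⁻¹ n)) q)
      = (f n)⁻¹ * ((f m)⁻¹ * Z.act (f (conj M q⁻¹ m)) q) * Z.act (f (conj M q⁻¹ n)) q by group]
  rw [hc (f n)⁻¹, mul_assoc]

lemma EE_one (m : ↥M) : EE M Z f m 1 = 1 := by
  unfold EE
  rw [inv_one, conj_one, Z.act_one, inv_mul_cancel]

include hf2 in
lemma EE_coset (m : ↥M) (q : Q) (p : Q) (hp : p ∈ P) :
    EE M Z f m (q * p) = EE M Z f m q := by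
  have hq' : q * p * q⁻¹ ∈ P := hPQ.conj_mem p hp q
  have key : Z.act (f (conj M (q * p)⁻¹ m)) (q * p)
      = Z.act (f (conj M q⁻¹ m)) q := by
    have h2 : conj M (q*p*q⁻¹) (conj M (q*p)⁻¹ m) = conj M q⁻¹ m := by
      rw [conj_conj]
      congr 1
      group
    have h3 : f (conj M (q*p*q⁻¹) (conj M (q*p)⁻¹ m))
        = Z.act (f (conj M (q*p)⁻¹ m)) (q*p*q⁻¹) := hf2 _ ⟨q*p*q⁻¹, hq'⟩
    calc Z.act (f (conj M (q * p)⁻¹ m)) (q * p)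
        = Z.act (Z.act (f (conj M (q*p)⁻¹ m)) (q*p*q⁻¹)) q := by
          rw [Z.act_act]
          congr 1
          group
      _ = Z.act (f (conj M (q*p*q⁻¹) (conj M (q*p)⁻¹ m))) q := by rw [h3]
      _ = Z.act (f (conj M q⁻¹ m)) q := by rw [h2]
  unfold EE
  rw [key]

end Ehyp

/-- `EE` with values in the center. -/
def Ec (hf1 : ∀ m : ↥M, Z.μ (f m) = (m : Q)) (m : ↥M) (q : Q) : ↥(Subgroup.center N) :=
  ⟨EE M Z f m q, EE_center M Z f hf1 m q⟩

variable (hf1 : ∀ m : ↥M, Z.μ (f m) = (m : Q))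
  (hf2 : ∀ (m : ↥M) (p : ↥P), f (conj M (p : Q) m) = Z.act (f m) (p : Q))

/-- `EE` descended to the quotient `Q ⧸ P`. -/
def Ebar (m : ↥M) : Q ⧸ P → ↥(Subgroup.center N) :=
  Quotient.lift (Ec M Z f hf1 m) (by
    intro a b hab
    have h : a⁻¹ * b ∈ P := QuotientGroup.leftRel_apply.1 hab
    apply Subtype.ext
    show EE M Z f m a = EE M Z f m b
    have : b = a * (a⁻¹ * b) := by group
    rw [this, EE_coset M P Z f hf2 m a _ h])

@[simp] lemma Ebar_mk (m : ↥M) (q : Q) :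
    Ebar M P Z f hf1 hf2 m (↑q : Q ⧸ P) = Ec M Z f hf1 m q := rfl

/-- The additive hom `ℤ[Q/P] → center N` determined by `m`. -/
noncomputable def DD (m : ↥M) :
    MonoidAlgebra ℤ (Q ⧸ P) →+ Additive ↥(Subgroup.center N) :=
  (Finsupp.liftAddHom fun g => zmultiplesHom _ (Additive.ofMul (Ebar M P Z f hf1 hf2 m g))).comp
    MonoidAlgebra.coeffAddEquiv.toAddMonoidHom

@[simp] lemma DD_single (m : ↥M) (g : Q ⧸ P) (c : ℤ) :
    DD M P Z f hf1 hf2 m (MonoidAlgebra.single g c)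
      = c • Additive.ofMul (Ebar M P Z f hf1 hf2 m g) :=
  Finsupp.liftAddHom_apply_single _ _ _

lemma DD_mul (m n : ↥M) :
    DD M P Z f hf1 hf2 (m * n) = DD M P Z f hf1 hf2 m + DD M P Z f hf1 hf2 n := by
  apply MonoidAlgebra.addMonoidHom_ext
  intro g c
  obtain ⟨q, rfl⟩ := QuotientGroup.mk_surjective g
  show DD M P Z f hf1 hf2 (m * n) (MonoidAlgebra.single _ c)
    = DD M P Z f hf1 hf2 m (MonoidAlgebra.single _ c)
      + DD M P Z f hf1 hf2 n (MonoidAlgebra.single _ c)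
  rw [DD_single, DD_single, DD_single, Ebar_mk, Ebar_mk, Ebar_mk]
  have h : Ec M Z f hf1 (m * n) q = Ec M Z f hf1 m q * Ec M Z f hf1 n q :=
    Subtype.ext (EE_mul M Z f hf1 m n q)
  rw [h, ofMul_mul, smul_add]

/-- `DD` as a monoid hom into the multiplicative additive-hom group. -/
noncomputable def DM : ↥M →* Multiplicative (MonoidAlgebra ℤ (Q ⧸ P) →+ Additive ↥(Subgroup.center N)) :=
  MonoidHom.mk' (fun m => Multiplicative.ofAdd (DD M P Z f hf1 hf2 m))
    (fun m n => by rw [← ofAdd_add, ← DD_mul])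

/-- `DD` factored through the abelianization, additively. -/
noncomputable def Dab : AbM M →+ (MonoidAlgebra ℤ (Q ⧸ P) →+ Additive ↥(Subgroup.center N)) :=
  MonoidHom.toAdditiveLeft (Abelianization.lift (DM M P Z f hf1 hf2))

@[simp] lemma Dab_ab (m : ↥M) :
    Dab M P Z f hf1 hf2 (ab M m) = DD M P Z f hf1 hf2 m := by
  simp [Dab, ab, Abelianization.lift_apply_of, DM]

/-- The bilinear map underlying `Θ`. -/
noncomputable def bil : AbM M →ₗ[ℤ] ↥(Iaug P) →ₗ[ℤ] Additive ↥(Subgroup.center N) where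
  toFun a := ((Dab M P Z f hf1 hf2 a).comp (inclA P)).toIntLinearMap
  map_add' a b := by
    apply LinearMap.ext; intro x
    show ((Dab M P Z f hf1 hf2) (a + b)) (inclA P x) = _
    rw [map_add]
    rfl
  map_smul' c a := by
    apply LinearMap.ext; intro x
    show ((Dab M P Z f hf1 hf2) (c • a)) (inclA P x) = _
    rw [map_zsmul]
    rfl

/-- The linear map `M^{ab} ⊗ I(Q/P) → center N`. -/
noncomputable def thetaA : A M P →ₗ[ℤ] Additive ↥(Subgroup.center N) :=
  TensorProduct.lift (bil M P Z f hf1 hf2)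

/-- The central multiplicative map `Θ : M^{ab} ⊗ I(Q/P) → N`. -/
noncomputable def Theta : Multiplicative (A M P) →* N :=
  (Subgroup.center N).subtype.comp
    (AddMonoidHom.toMultiplicativeLeft (thetaA M P Z f hf1 hf2).toAddMonoidHom)

lemma Theta_central (a : Multiplicative (A M P)) (g : N) :
    g * Theta M P Z f hf1 hf2 a = Theta M P Z f hf1 hf2 a * g := by
  have h : Theta M P Z f hf1 hf2 a ∈ Subgroup.center N := by
    exact ((AddMonoidHom.toMultiplicativeLeft
      (thetaA M P Z f hf1 hf2).toAddMonoidHom) a).2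
  exact Subgroup.mem_center_iff.1 h g

lemma Theta_tmul (m : ↥M) (q : Q) :
    Theta M P Z f hf1 hf2 (Multiplicative.ofAdd (ab M m ⊗ₜ[ℤ] delta P q))
      = EE M Z f m q := by
  show ((thetaA M P Z f hf1 hf2 (ab M m ⊗ₜ[ℤ] delta P q)).toMul : ↥(Subgroup.center N)).1 = _
  erw [thetaA, TensorProduct.lift.tmul]
  show ((((Dab M P Z f hf1 hf2) (ab M m)) (inclA P (delta P q))).toMul
      : ↥(Subgroup.center N)).1 = _
  rw [Dab_ab]
  rw [show inclA P (delta P q) = MonoidAlgebra.single (↑q : Q ⧸ P) 1 - 1 from delta_coe P q]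
  rw [MonoidAlgebra.one_def, map_sub, DD_single, DD_single, Ebar_mk, one_smul, one_smul]
  have h1 : Ec M Z f hf1 m 1 = 1 := by
    apply Subtype.ext
    exact EE_one M Z f m
  have h0 : Ebar M P Z f hf1 hf2 m (1 : Q ⧸ P) = Ec M Z f hf1 m 1 := rfl
  rw [h0, h1]
  simp [Ec]

end IndAux

namespace IndAux

variable {Q : Type u} [Group Q] (M P : Subgroup Q) [hMQ : M.Normal] [hPQ : P.Normal]
variable {N : Type u} [Group N]

lemma ab_surj : Function.Surjective (ab M) := by
  intro t
  obtain ⟨z, hz⟩ := QuotientGroup.mk_surjective (Additive.toMul t)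
  exact ⟨z, congrArg Additive.ofMul hz⟩

/-- The tensoring-with-`t` additive hom. -/
noncomputable def tmulHom (t : AbM M) : ↥(Iaug P) →+ A M P where
  toFun x := t ⊗ₜ[ℤ] x
  map_zero' := TensorProduct.tmul_zero _ t
  map_add' x y := TensorProduct.tmul_add t x y

/-- Monoid homs out of `Multiplicative (A M P)` agreeing on the generators
`[m] ⊗ ([q] - 1)` are equal. -/
lemma genext {T : Type u} [Group T] (g₁ g₂ : Multiplicative (A M P) →* T)
    (h : ∀ (m : ↥M) (q : Q),
      g₁ (Multiplicative.ofAdd (ab M m ⊗ₜ[ℤ] delta P q))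
        = g₂ (Multiplicative.ofAdd (ab M m ⊗ₜ[ℤ] delta P q)))
    (a : A M P) :
    g₁ (Multiplicative.ofAdd a) = g₂ (Multiplicative.ofAdd a) := by
  induction a using TensorProduct.induction_on with
  | zero =>
      show g₁ 1 = g₂ 1
      rw [map_one, map_one]
  | tmul t x =>
      obtain ⟨m, rfl⟩ := ab_surj M t
      let S : Submodule ℤ ↥(Iaug P) :=
        { carrier := {x | g₁ (Multiplicative.ofAdd (ab M m ⊗ₜ[ℤ] x))
            = g₂ (Multiplicative.ofAdd (ab M m ⊗ₜ[ℤ] x))}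
          add_mem' := by
            intro x y hx hy
            show g₁ (Multiplicative.ofAdd (ab M m ⊗ₜ[ℤ] (x + y))) = _
            rw [TensorProduct.tmul_add, ofAdd_add, map_mul, map_mul, hx, hy,
              ← map_mul, ← ofAdd_add, ← TensorProduct.tmul_add]
          zero_mem' := by
            show g₁ (Multiplicative.ofAdd (ab M m ⊗ₜ[ℤ] (0 : ↥(Iaug P)))) = _
            rw [TensorProduct.tmul_zero]
            show g₁ 1 = g₂ 1
            rw [map_one, map_one]
          smul_mem' := by
            intro c x hx
            show g₁ (Multiplicative.ofAdd (ab M m ⊗ₜ[ℤ] (c • x))) = _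
            rw [TensorProduct.tmul_smul, ofAdd_zsmul, map_zpow, map_zpow, hx] }
      have hx : x ∈ S := by
        refine Submodule.span_le.2 ?_ (mem_span_delta P x)
        rintro y ⟨q, rfl⟩
        exact h m q
      exact hx
  | add a b ha hb =>
      rw [ofAdd_add, map_mul, map_mul, ha, hb]

variable (Z : CrossedModule N Q) (f : ↥M →* N)
variable (hf1 : ∀ m : ↥M, Z.μ (f m) = (m : Q))
  (hf2 : ∀ (m : ↥M) (p : ↥P), f (conj M (p : Q) m) = Z.act (f m) (p : Q))

lemma mu_Theta (a : Multiplicative (A M P)) :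
    Z.μ (Theta M P Z f hf1 hf2 a) = 1 := by
  have h := genext M P (Z.μ.comp (Theta M P Z f hf1 hf2)) 1
    (fun m q => by
      show Z.μ (Theta M P Z f hf1 hf2 _) = 1
      rw [Theta_tmul, EE_ker M Z f hf1]) a.toAdd
  exact h

lemma Theta_rho (q : Q) (a : A M P) :
    Theta M P Z f hf1 hf2 (Multiplicative.ofAdd (rho M P q a))
      = Z.act (Theta M P Z f hf1 hf2 (Multiplicative.ofAdd a)) q := by
  refine genext M P
    ((Theta M P Z f hf1 hf2).comp
      (AddMonoidHom.toMultiplicative (rho M P q).toAddMonoidHom))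
    ((actHom Z q).comp (Theta M P Z f hf1 hf2)) ?_ a
  intro m q'
  show Theta M P Z f hf1 hf2 (Multiplicative.ofAdd (rho M P q (ab M m ⊗ₜ[ℤ] delta P q')))
    = Z.act (Theta M P Z f hf1 hf2 (Multiplicative.ofAdd (ab M m ⊗ₜ[ℤ] delta P q'))) q
  rw [rho_tmul, alpha_ab, beta_delta, TensorProduct.tmul_sub, ofAdd_sub, map_div,
    Theta_tmul, Theta_tmul, Theta_tmul]
  have e1 : conj M (q' * q)⁻¹ (conj M q m) = conj M q'⁻¹ m := by
    rw [conj_conj]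
    congr 1
    group
  have e2 : conj M q⁻¹ (conj M q m) = m := by
    rw [conj_conj, mul_inv_cancel, conj_one]
  have hcent := Subgroup.mem_center_iff.1 (EE_center M Z f hf1 (conj M q m) (q' * q))
  unfold EE at hcent ⊢
  rw [e1] at hcent ⊢
  rw [e2]
  rw [div_eq_mul_inv, mul_inv_rev, inv_inv]
  rw [Z.act_mul, act_inv, Z.act_act]
  calc (f (conj M q m))⁻¹ * Z.act (f (conj M q'⁻¹ m)) (q' * q)
        * ((Z.act (f m) q)⁻¹ * f (conj M q m))
      = ((f (conj M q m))⁻¹ * Z.act (f (conj M q'⁻¹ m)) (q' * q))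
        * ((Z.act (f m) q)⁻¹ * f (conj M q m)) := by group
    _ = ((Z.act (f m) q)⁻¹ * f (conj M q m))
        * ((f (conj M q m))⁻¹ * Z.act (f (conj M q'⁻¹ m)) (q' * q)) := (hcent _).symm
    _ = (Z.act (f m) q)⁻¹ * Z.act (f (conj M q'⁻¹ m)) (q' * q) := by group

end IndAux

namespace IndAux

variable {Q : Type u} [Group Q] (M P : Subgroup Q) [hMQ : M.Normal] [hPQ : P.Normal]
variable {N : Type u} [Group N]
variable (Z : CrossedModule N Q) (f : ↥M →* N)
variable (hf1 : ∀ m : ↥M, Z.μ (f m) = (m : Q))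
  (hf2 : ∀ (m : ↥M) (p : ↥P), f (conj M (p : Q) m) = Z.act (f m) (p : Q))

/-- The comparison map `M × (M^{ab} ⊗ I(Q/P)) → N`. -/
noncomputable def psi : (↥M × Multiplicative (A M P)) →* N where
  toFun k := f k.1 * Theta M P Z f hf1 hf2 k.2
  map_one' := by
    show f 1 * Theta M P Z f hf1 hf2 1 = 1
    rw [map_one, map_one, mul_one]
  map_mul' k l := by
    show f (k.1 * l.1) * Theta M P Z f hf1 hf2 (k.2 * l.2)
      = (f k.1 * Theta M P Z f hf1 hf2 k.2) * (f l.1 * Theta M P Z f hf1 hf2 l.2)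
    rw [map_mul, map_mul]
    simp only [mul_assoc]
    congr 1
    rw [← mul_assoc, Theta_central M P Z f hf1 hf2 k.2 (f l.1), mul_assoc]

lemma psi_apply (k) : psi M P Z f hf1 hf2 k = f k.1 * Theta M P Z f hf1 hf2 k.2 := rfl

lemma psi_mu (hMP : M ≤ P) (k) :
    Z.μ (psi M P Z f hf1 hf2 k) = (Zcm M P hMP).μ k := by
  show Z.μ (f k.1 * Theta M P Z f hf1 hf2 k.2) = (k.1 : Q)
  rw [map_mul, hf1, mu_Theta, mul_one]

lemma psi_jK (m : ↥M) : psi M P Z f hf1 hf2 (jK M P m) = f m := by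
  show f m * Theta M P Z f hf1 hf2 1 = f m
  rw [map_one, mul_one]

lemma psi_act (hMP : M ≤ P) (k) (q : Q) :
    psi M P Z f hf1 hf2 ((Zcm M P hMP).act k q) = Z.act (psi M P Z f hf1 hf2 k) q := by
  show f (conj M q k.1) * Theta M P Z f hf1 hf2 (Multiplicative.ofAdd (rho M P q k.2.toAdd
      + ab M (conj M q k.1) ⊗ₜ[ℤ] delta P q))
    = Z.act (f k.1 * Theta M P Z f hf1 hf2 (Multiplicative.ofAdd k.2.toAdd)) q
  rw [ofAdd_add, map_mul, Theta_tmul, Z.act_mul, ← Theta_rho M P Z f hf1 hf2 q]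
  unfold EE
  have e2 : conj M q⁻¹ (conj M q k.1) = k.1 := by
    rw [conj_conj, mul_inv_cancel, conj_one]
  rw [e2]
  have hT := Theta_central M P Z f hf1 hf2 (Multiplicative.ofAdd (rho M P q k.2.toAdd))
  calc f (conj M q k.1) * (Theta M P Z f hf1 hf2 (Multiplicative.ofAdd (rho M P q k.2.toAdd))
        * ((f (conj M q k.1))⁻¹ * Z.act (f k.1) q))
      = (f (conj M q k.1) * Theta M P Z f hf1 hf2 (Multiplicative.ofAdd (rho M P q k.2.toAdd)))
        * ((f (conj M q k.1))⁻¹ * Z.act (f k.1) q) := by rw [mul_assoc]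
    _ = (Theta M P Z f hf1 hf2 (Multiplicative.ofAdd (rho M P q k.2.toAdd)) * f (conj M q k.1))
        * ((f (conj M q k.1))⁻¹ * Z.act (f k.1) q) := by rw [hT (f (conj M q k.1))]
    _ = Theta M P Z f hf1 hf2 (Multiplicative.ofAdd (rho M P q k.2.toAdd))
        * Z.act (f k.1) q := by group
    _ = Z.act (f k.1) q
        * Theta M P Z f hf1 hf2 (Multiplicative.ofAdd (rho M P q k.2.toAdd)) :=
      (hT (Z.act (f k.1) q)).symm

end IndAux


/-- Let `M ≤ P` be subgroups of `Q`, both normal in `Q`, `(μ : M → P)` the normal subgroup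
crossed module (inclusion with conjugation action), `ι : P → Q` the inclusion.  Then for any
induced crossed module `(∂ : I → Q, j)` of `(μ : M → P)` along `ι`, there is a group
isomorphism `I ≅ M × (M^{ab} ⊗_ℤ I(Q/P))`, where `I(Q/P)` is the augmentation ideal of
`ℤ[Q/P]`, i.e. the kernel of the augmentation `ℤ[Q/P] → ℤ`. -/
theorem induced_of_normal_normal {Q : Type u} [Group Q] (M P : Subgroup Q)
    (hMP : M ≤ P) [hMQ : M.Normal] [hPQ : P.Normal]
    (X : CrossedModule ↥M ↥P)
    (hXμ : ∀ m : M, (X.μ m : Q) = (m : Q))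
    (hXact : ∀ (m : M) (p : P), ((X.act m p : ↥M) : Q) = (p : Q)⁻¹ * (m : Q) * (p : Q))
    {I : Type u} [Group I] (Y : CrossedModule I Q) (j : ↥M →* I)
    (hInd : IsInducedCrossedModule X P.subtype Y j) :
    Nonempty (I ≃* ↥M × Multiplicative (TensorProduct ℤ (Additive (Abelianization ↥M))
      (RingHom.ker ((MonoidAlgebra.lift ℤ ℤ (Q ⧸ P)) 1).toRingHom))) := by
  classical
  obtain ⟨⟨hj1, hj2⟩, huniv⟩ := hInd
  have hf1 : ∀ m : ↥M, Y.μ (j m) = (m : Q) := fun m => (hj1 m).trans (hXμ m)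
  have hf2 : ∀ (m : ↥M) (p : ↥P), j (IndAux.conj M (p : Q) m) = Y.act (j m) (p : Q) := by
    intro m p
    have h1 : X.act m p = IndAux.conj M (p : Q) m := by
      apply Subtype.ext
      rw [hXact]
      rfl
    rw [← h1]
    exact hj2 m p
  obtain ⟨φ, ⟨hφμ, hφact, hφj⟩, -⟩ :=
    huniv (↥M × Multiplicative (IndAux.A M P)) (IndAux.Zcm M P hMP) (IndAux.jK M P)
      (IndAux.jK_morphism M P hMP X hXμ hXact)
  -- `φ` composed with `Θ` is the inclusion of the second factor
  have hφΘ : ∀ a : IndAux.A M P,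
      φ (IndAux.Theta M P Y j hf1 hf2 (Multiplicative.ofAdd a))
        = ((1 : ↥M), Multiplicative.ofAdd a) := by
    intro a
    refine IndAux.genext M P (φ.comp (IndAux.Theta M P Y j hf1 hf2))
      (MonoidHom.inr ↥M (Multiplicative (IndAux.A M P))) ?_ a
    intro m q
    show φ (IndAux.Theta M P Y j hf1 hf2 (Multiplicative.ofAdd
      (IndAux.ab M m ⊗ₜ[ℤ] IndAux.delta P q))) = _
    rw [IndAux.Theta_tmul]
    unfold IndAux.EE
    rw [map_mul, map_inv, hφj, hφact, hφj]
    have e3 : IndAux.conj M q (IndAux.conj M q⁻¹ m) = m := by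
      rw [IndAux.conj_conj, inv_mul_cancel, IndAux.conj_one]
    refine Prod.ext ?_ ?_
    · show m⁻¹ * IndAux.conj M q (IndAux.conj M q⁻¹ m) = 1
      rw [e3, inv_mul_cancel]
    · show (1 : Multiplicative (IndAux.A M P))⁻¹ * Multiplicative.ofAdd
          (IndAux.rho M P q (Multiplicative.toAdd (1 : Multiplicative (IndAux.A M P)))
            + IndAux.ab M (IndAux.conj M q (IndAux.conj M q⁻¹ m)) ⊗ₜ[ℤ] IndAux.delta P q)
        = Multiplicative.ofAdd (IndAux.ab M m ⊗ₜ[ℤ] IndAux.delta P q)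
      rw [e3, inv_one, one_mul]
      show Multiplicative.ofAdd ((IndAux.rho M P q) 0
          + IndAux.ab M m ⊗ₜ[ℤ] IndAux.delta P q) = _
      rw [map_zero, zero_add]
  have hφψ : ∀ k, φ (IndAux.psi M P Y j hf1 hf2 k) = k := by
    intro k
    rw [IndAux.psi_apply, map_mul, hφj]
    have h2 : φ (IndAux.Theta M P Y j hf1 hf2 k.2) = ((1 : ↥M), k.2) := hφΘ k.2.toAdd
    rw [h2]
    refine Prod.ext ?_ ?_
    · show k.1 * 1 = k.1
      rw [mul_one]
    · show 1 * k.2 = k.2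
      rw [one_mul]
  obtain ⟨φ₀, hφ₀, hφ₀uniq⟩ := huniv I Y j ⟨hj1, hj2⟩
  have hid : (MonoidHom.id I) = φ₀ :=
    hφ₀uniq _ ⟨fun _ => rfl, fun _ _ => rfl, fun _ => rfl⟩
  have hcomp : ((IndAux.psi M P Y j hf1 hf2).comp φ) = φ₀ := by
    apply hφ₀uniq
    refine ⟨?_, ?_, ?_⟩
    · intro x
      show Y.μ (IndAux.psi M P Y j hf1 hf2 (φ x)) = Y.μ x
      rw [IndAux.psi_mu M P Y j hf1 hf2 hMP, hφμ]
    · intro x q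
      show IndAux.psi M P Y j hf1 hf2 (φ (Y.act x q))
        = Y.act (IndAux.psi M P Y j hf1 hf2 (φ x)) q
      rw [hφact, IndAux.psi_act M P Y j hf1 hf2 hMP]
    · intro m
      show IndAux.psi M P Y j hf1 hf2 (φ (j m)) = j m
      rw [hφj, IndAux.psi_jK]
  have hψφ : ∀ x, IndAux.psi M P Y j hf1 hf2 (φ x) = x := fun x =>
    congrArg (fun (h : I →* I) => h x) (hcomp.trans hid.symm)
  exact ⟨{ toFun := φ, invFun := IndAux.psi M P Y j hf1 hf2,
           left_inv := hψφ, right_inv := hφψ, map_mul' := φ.map_mul }⟩
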